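/- Let A ∈ ℂ^{n×n} and B ∈ ℂ^{m×m}. The continuous Sylvester equation AX + XB = C has a unique solution X ∈ ℂ^{n×m} for every right-hand side C ∈ ℂ^{n×m} (equivalently, the linear map X ↦ AX + XB on ℂ^{n×m} is bijective) if and only if A and −B have no common eigenvalue, i.e., the spectrum of A and the spectrum of −B are disjoint. -/

import Mathlib

open Matrix Polynomial

lemma eval_charpoly_aux {k : ℕ} (A : Matrix (Fin k) (Fin k) ℂ) (μ : ℂ) :
    (Matrix.charpoly A).eval μ = (Matrix.scalar (Fin k) μ - A).det := by
  rw [Matrix.charpoly, eval_det, matPolyEquiv_charmatrix]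
  simp

lemma mem_spectrum_iff_root_aux {k : ℕ} (A : Matrix (Fin k) (Fin k) ℂ) (μ : ℂ) :
    μ ∈ spectrum ℂ A ↔ (Matrix.charpoly A).IsRoot μ := by
  rw [spectrum.mem_iff, Polynomial.IsRoot, eval_charpoly_aux,
    Matrix.isUnit_iff_isUnit_det, isUnit_iff_ne_zero, not_ne_iff]
  congr! 2

lemma det_sub_scalar_eq_zero_of_mem_spectrum {k : ℕ} {A : Matrix (Fin k) (Fin k) ℂ} {μ : ℂ}
    (h : μ ∈ spectrum ℂ A) : (Matrix.scalar (Fin k) μ - A).det = 0 := by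
  have h' := spectrum.mem_iff.mp h
  rw [Matrix.isUnit_iff_isUnit_det, isUnit_iff_ne_zero, not_ne_iff] at h'
  convert h' using 2
  ext i j
  simp [Matrix.algebraMap_matrix_apply, Matrix.scalar_apply, Matrix.diagonal_apply]

lemma sylvester_injective_aux {n m : ℕ} (A : Matrix (Fin n) (Fin n) ℂ)
    (B : Matrix (Fin m) (Fin m) ℂ)
    (hd : Disjoint (spectrum ℂ A) (spectrum ℂ (-B)))
    (Y : Matrix (Fin n) (Fin m) ℂ) (hX : A * Y + Y * B = 0) : Y = 0 := by
  rcases Nat.eq_zero_or_pos n with hn | hn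
  · subst hn; ext i j; exact i.elim0
  rcases Nat.eq_zero_or_pos m with hm | hm
  · subst hm; ext i j; exact j.elim0
  haveI : Nonempty (Fin n) := Fin.pos_iff_nonempty.mp hn
  haveI : Nonempty (Fin m) := Fin.pos_iff_nonempty.mp hm
  have hAX : A * Y = Y * (-B) := by
    rw [Matrix.mul_neg]
    exact eq_neg_of_add_eq_zero_left hX
  have hpow : ∀ k : ℕ, A ^ k * Y = Y * (-B) ^ k := by
    intro k
    induction k with
    | zero => simp
    | succ k ih =>
      calc A ^ (k + 1) * Y = A ^ k * (A * Y) := by rw [pow_succ, Matrix.mul_assoc]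
        _ = A ^ k * Y * (-B) := by rw [hAX, ← Matrix.mul_assoc]
        _ = Y * (-B) ^ (k + 1) := by rw [ih, Matrix.mul_assoc, ← pow_succ]
  have comm : ∀ p : ℂ[X], (Polynomial.aeval A p) * Y = Y * (Polynomial.aeval (-B) p) := by
    intro p
    induction p using Polynomial.induction_on' with
    | add p q hp hq => simp [Matrix.add_mul, Matrix.mul_add, hp, hq]
    | monomial k a =>
      simp only [Polynomial.aeval_monomial, Algebra.algebraMap_eq_smul_one, smul_mul_assoc,
        one_mul, Matrix.smul_mul, Matrix.mul_smul, hpow k]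
  have h0 : Y * (Polynomial.aeval (-B) (Matrix.charpoly A)) = 0 := by
    rw [← comm, Matrix.aeval_self_charpoly, Matrix.zero_mul]
  have hdeg : 0 < (Matrix.charpoly A).degree := by
    rw [Matrix.charpoly_degree_eq_dim]
    exact_mod_cast Fintype.card_pos
  have hunit : IsUnit (Polynomial.aeval (-B) (Matrix.charpoly A)) := by
    by_contra hnu
    have h0s : (0 : ℂ) ∈ spectrum ℂ (Polynomial.aeval (-B) (Matrix.charpoly A)) :=
      (spectrum.zero_mem_iff ℂ).mpr hnu
    rw [spectrum.map_polynomial_aeval_of_degree_pos (-B) (Matrix.charpoly A) hdeg] at h0s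
    obtain ⟨μ, hμB, hμ0⟩ := h0s
    have hμA : μ ∈ spectrum ℂ A := (mem_spectrum_iff_root_aux A μ).mpr hμ0
    exact Set.disjoint_left.mp hd hμA hμB
  obtain ⟨u, hu⟩ := hunit
  have h1 : (Polynomial.aeval (-B) (Matrix.charpoly A)) * (↑u⁻¹ : Matrix (Fin m) (Fin m) ℂ) = 1 := by
    rw [← hu]; exact u.mul_inv
  calc Y = Y * 1 := (Matrix.mul_one Y).symm
    _ = Y * ((Polynomial.aeval (-B) (Matrix.charpoly A)) * (↑u⁻¹ : Matrix (Fin m) (Fin m) ℂ)) := by rw [h1]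
    _ = (Y * (Polynomial.aeval (-B) (Matrix.charpoly A))) * (↑u⁻¹ : Matrix (Fin m) (Fin m) ℂ) := by rw [Matrix.mul_assoc]
    _ = 0 := by rw [h0, Matrix.zero_mul]

/-- The continuous Sylvester equation `AX + XB = C` has a unique solution for every
right-hand side `C` (equivalently, `X ↦ AX + XB` is bijective) if and only if the
spectra of `A` and `-B` are disjoint. -/
theorem sylvester_unique_solution_iff_spectra_disjoint
    {n m : ℕ} (A : Matrix (Fin n) (Fin n) ℂ) (B : Matrix (Fin m) (Fin m) ℂ) :
    ((∀ C : Matrix (Fin n) (Fin m) ℂ, ∃! X : Matrix (Fin n) (Fin m) ℂ, A * X + X * B = C) ∧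
      Function.Bijective (fun X : Matrix (Fin n) (Fin m) ℂ => A * X + X * B)) ↔
      Disjoint (spectrum ℂ A) (spectrum ℂ (-B)) := by
  constructor
  · rintro ⟨-, hbij⟩
    rw [Set.disjoint_left]
    rintro μ hμA hμB
    obtain ⟨v, hv0, hv⟩ : ∃ v : Fin n → ℂ, v ≠ 0 ∧ (Matrix.scalar (Fin n) μ - A) *ᵥ v = 0 :=
      (Matrix.exists_mulVec_eq_zero_iff).mpr (det_sub_scalar_eq_zero_of_mem_spectrum hμA)
    obtain ⟨w, hw0, hw⟩ : ∃ w : Fin m → ℂ, w ≠ 0 ∧ (Matrix.scalar (Fin m) μ - (-B)ᵀ) *ᵥ w = 0 := by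
      refine (Matrix.exists_mulVec_eq_zero_iff).mpr ?_
      have h3 : (Matrix.scalar (Fin m) μ - (-B)ᵀ) = (Matrix.scalar (Fin m) μ - (-B))ᵀ := by
        rw [Matrix.transpose_sub]
        congr 1
        simp [Matrix.scalar_apply]
      rw [h3, Matrix.det_transpose]
      exact det_sub_scalar_eq_zero_of_mem_spectrum hμB
    have hv' : A *ᵥ v = μ • v := by
      rw [Matrix.sub_mulVec] at hv
      have := sub_eq_zero.mp hv
      rw [← this]
      ext i
      simp [Matrix.scalar_apply, Matrix.mulVec_diagonal]
    have hw' : Bᵀ *ᵥ w = (-μ) • w := by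
      rw [Matrix.sub_mulVec] at hw
      have h := sub_eq_zero.mp hw
      rw [Matrix.transpose_neg, Matrix.neg_mulVec] at h
      have h2 : Bᵀ *ᵥ w = -(Matrix.scalar (Fin m) μ *ᵥ w) := by
        rw [← neg_neg (Bᵀ *ᵥ w), ← h]
      rw [h2]
      ext i
      simp [Matrix.scalar_apply, Matrix.mulVec_diagonal]
    set Y : Matrix (Fin n) (Fin m) ℂ := Matrix.vecMulVec v w with hY
    have hSY : A * Y + Y * B = 0 := by
      ext i j
      have h1 : (A * Y) i j = (A *ᵥ v) i * w j := by
        simp only [Matrix.mul_apply, hY, Matrix.vecMulVec_apply, Matrix.mulVec, dotProduct,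
          Finset.sum_mul, mul_assoc]
      have h2 : (Y * B) i j = v i * (Bᵀ *ᵥ w) j := by
        simp only [Matrix.mul_apply, hY, Matrix.vecMulVec_apply, Matrix.mulVec, dotProduct,
          Matrix.transpose_apply, Finset.mul_sum]
        exact Finset.sum_congr rfl fun k _ => by ring
      simp only [Matrix.add_apply, h1, h2, hv', hw', Pi.smul_apply, smul_eq_mul,
        Matrix.zero_apply]
      ring
    have hY0 : Y ≠ 0 := by
      obtain ⟨i, hi⟩ := Function.ne_iff.mp hv0
      obtain ⟨j, hj⟩ := Function.ne_iff.mp hw0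
      intro h
      have := congrFun (congrFun h i) j
      rw [hY, Matrix.vecMulVec_apply, Matrix.zero_apply] at this
      exact (mul_ne_zero hi hj) this
    apply hY0
    have : (fun X : Matrix (Fin n) (Fin m) ℂ => A * X + X * B) Y =
        (fun X : Matrix (Fin n) (Fin m) ℂ => A * X + X * B) 0 := by
      simpa using hSY
    exact hbij.injective this
  · intro hd
    have hinj : Function.Injective (fun X : Matrix (Fin n) (Fin m) ℂ => A * X + X * B) := by
      intro X Y hXY
      simp only at hXY
      have h : A * (X - Y) + (X - Y) * B = 0 := by
        rw [Matrix.mul_sub, Matrix.sub_mul, sub_add_sub_comm, hXY, sub_self]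
      exact sub_eq_zero.mp (sylvester_injective_aux A B hd _ h)
    set S : Matrix (Fin n) (Fin m) ℂ →ₗ[ℂ] Matrix (Fin n) (Fin m) ℂ :=
      { toFun := fun X => A * X + X * B
        map_add' := fun X Y => by
          simp only [Matrix.mul_add, Matrix.add_mul]; abel
        map_smul' := fun c X => by
          simp only [Matrix.mul_smul, Matrix.smul_mul, RingHom.id_apply, smul_add] } with hS
    have hbij : Function.Bijective (fun X : Matrix (Fin n) (Fin m) ℂ => A * X + X * B) :=
      ⟨hinj, (LinearMap.injective_iff_surjective (f := S)).mp hinj⟩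
    exact ⟨fun C => hbij.existsUnique C, hbij⟩
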